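/- Let p be a prime and let G be a countable, locally finite group of characteristic p. Suppose that G has a maximal p-subgroup S such that every p-subgroup of G is conjugate in G to a subgroup of S, and that S has the normalizer-increasing property. Then every p-local subgroup of G is of characteristic p; that is, for every p-subgroup U of G, the group H = N_G(U) satisfies C_H(O_p(H)) ≤ O_p(H). -/

import Mathlib

/-- A group `P` has the normalizer-increasing property if for all subgroups `X < Y` of
`P`, `X` is a proper subgroup of `N_Y(X)`. -/
def NormalizerIncreasing (P : Type*) [Group P] : Prop :=
  ∀ X Y : Subgroup P, X < Y → X < Subgroup.normalizer (X : Set P) ⊓ Y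

/-- A group is locally finite if every finitely generated subgroup is finite. -/
def LocallyFiniteGroup (G : Type*) [Group G] : Prop :=
  ∀ s : Finset G, ((Subgroup.closure (s : Set G) : Subgroup G) : Set G).Finite

/-- `H` is of characteristic `p`: the largest normal `p`-subgroup `O_p(H)` of `H` exists
and `C_H(O_p(H)) ≤ O_p(H)`. -/
def CharacteristicPGroup (p : ℕ) (H : Type*) [Group H] : Prop :=
  ∃ O : Subgroup H, IsGreatest {N : Subgroup H | N.Normal ∧ IsPGroup p ↥N} O ∧
    Subgroup.centralizer (O : Set H) ≤ O

section Auxiliary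

open Subgroup Pointwise

variable {G : Type*} [Group G]

lemma isPGroup_subgroup_iff (p : ℕ) (A : Subgroup G) :
    IsPGroup p ↥A ↔ ∀ g ∈ A, ∃ k : ℕ, g ^ p ^ k = 1 := by
  constructor
  · intro h g hg
    obtain ⟨k, hk⟩ := h ⟨g, hg⟩
    exact ⟨k, by simpa [Subtype.ext_iff] using hk⟩
  · intro h g
    obtain ⟨k, hk⟩ := h g g.2
    exact ⟨k, by ext : 1; simpa using hk⟩


/-- From the normalizer-increasing property of `Sp` and conjugacy of all `p`-subgroups
into `Sp`: for any `p`-subgroups `A < B` there is an element of `B` outside `A`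
normalizing `A`. -/
lemma exists_normalizing (p : ℕ) (Sp : Subgroup G)
    (hSconj : ∀ T : Subgroup G, IsPGroup p ↥T → ∃ g : G, ∀ t ∈ T, g⁻¹ * t * g ∈ Sp)
    (hSni : NormalizerIncreasing ↥Sp)
    (A B : Subgroup G) (hB : IsPGroup p ↥B) (hAB : A < B) :
    ∃ z ∈ B, z ∈ (Subgroup.normalizer (A : Set G)) ∧ z ∉ A := by
  obtain ⟨g, hg⟩ := hSconj B hB
  set e : G ≃* G := MulAut.conj g⁻¹ with he
  have he_apply : ∀ t : G, e t = g⁻¹ * t * g := by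
    intro t; simp [he, MulAut.conj_apply]
  set Ac : Subgroup G := A.map e.toMonoidHom with hAc
  set Bc : Subgroup G := B.map e.toMonoidHom with hBc
  have hmemAc : ∀ t : G, t ∈ A ↔ e t ∈ Ac := by
    intro t
    constructor
    · intro ht; exact ⟨t, ht, rfl⟩
    · rintro ⟨s, hs, hst⟩
      have : s = t := e.injective hst
      exact this ▸ hs
  have hmemBc : ∀ t : G, t ∈ B ↔ e t ∈ Bc := by
    intro t
    constructor
    · intro ht; exact ⟨t, ht, rfl⟩
    · rintro ⟨s, hs, hst⟩
      have : s = t := e.injective hst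
      exact this ▸ hs
  have hBcSp : Bc ≤ Sp := by
    rintro x ⟨t, ht, rfl⟩
    simpa [he_apply] using hg t ht
  have hAcBc : Ac ≤ Bc := Subgroup.map_mono hAB.le
  have hAcSp : Ac ≤ Sp := hAcBc.trans hBcSp
  -- pass to subgroups of Sp
  set X : Subgroup ↥Sp := Ac.subgroupOf Sp with hX
  set Yb : Subgroup ↥Sp := Bc.subgroupOf Sp with hY
  have hXY : X < Yb := by
    refine lt_of_le_of_ne (Subgroup.comap_mono hAcBc) ?_
    obtain ⟨b, hbB, hbA⟩ := SetLike.exists_of_lt hAB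
    intro hEq
    have h1 : (⟨e b, hBcSp ((hmemBc b).mp hbB)⟩ : ↥Sp) ∈ Yb := by
      simpa [hY, Subgroup.mem_subgroupOf] using (hmemBc b).mp hbB
    rw [← hEq] at h1
    have : e b ∈ Ac := by simpa [hX, Subgroup.mem_subgroupOf] using h1
    exact hbA ((hmemAc b).mpr this)
  have hlt := hSni X Yb hXY
  obtain ⟨s, hs, hsX⟩ := SetLike.exists_of_lt hlt
  obtain ⟨hsN, hsY⟩ := hs
  -- z₀ := s as element of G
  set z₀ : G := (s : G) with hz₀
  have hz₀Bc : z₀ ∈ Bc := by simpa [hY, Subgroup.mem_subgroupOf] using hsY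
  have hz₀Ac : z₀ ∉ Ac := fun h => hsX (by simpa [hX, Subgroup.mem_subgroupOf] using h)
  -- z₀ normalizes Ac (in G)
  have hz₀norm : z₀ ∈ (Subgroup.normalizer (Ac : Set G)) := by
    rw [Subgroup.mem_normalizer_iff]
    intro h
    constructor
    · intro hh
      have hhSp : h ∈ Sp := hAcSp hh
      have : (⟨h, hhSp⟩ : ↥Sp) ∈ X := by simpa [hX, Subgroup.mem_subgroupOf] using hh
      have := (Subgroup.mem_normalizer_iff.mp hsN ⟨h, hhSp⟩).mp this
      simpa [hX, Subgroup.mem_subgroupOf] using this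
    · intro hh
      have hconjSp : z₀ * h * z₀⁻¹ ∈ Sp := hAcSp hh
      have hz₀Sp : z₀ ∈ Sp := s.2
      have hhSp : h ∈ Sp := by
        have : z₀⁻¹ * (z₀ * h * z₀⁻¹) * z₀ ∈ Sp :=
          Sp.mul_mem (Sp.mul_mem (Sp.inv_mem hz₀Sp) hconjSp) hz₀Sp
        simpa [mul_assoc] using this
      have h2 : s * ⟨h, hhSp⟩ * s⁻¹ ∈ X := by
        rw [Subgroup.mem_subgroupOf]
        simpa using hh
      have := (Subgroup.mem_normalizer_iff.mp hsN ⟨h, hhSp⟩).mpr h2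
      simpa [hX, Subgroup.mem_subgroupOf] using this
  -- pull back by conjugation
  refine ⟨g * z₀ * g⁻¹, ?_, ?_, ?_⟩
  · obtain ⟨b, hbB, hbz⟩ := hz₀Bc
    have hbz' : e b = z₀ := hbz
    have : b = g * z₀ * g⁻¹ := by
      rw [← hbz', he_apply]; group
    exact this ▸ hbB
  · rw [Subgroup.mem_normalizer_iff]
    intro h
    have key : e (g * z₀ * g⁻¹ * h * (g * z₀ * g⁻¹)⁻¹) = z₀ * e h * z₀⁻¹ := by
      simp only [he_apply]; group
    constructor
    · intro hh
      have h1 : e h ∈ Ac := (hmemAc h).mp hh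
      have h2 : z₀ * e h * z₀⁻¹ ∈ Ac := (Subgroup.mem_normalizer_iff.mp hz₀norm (e h)).mp h1
      have := (hmemAc _).mpr (key ▸ h2)
      exact this
    · intro hh
      have h1 : e (g * z₀ * g⁻¹ * h * (g * z₀ * g⁻¹)⁻¹) ∈ Ac := (hmemAc _).mp hh
      rw [key] at h1
      have h2 : e h ∈ Ac := (Subgroup.mem_normalizer_iff.mp hz₀norm (e h)).mpr h1
      exact (hmemAc h).mpr h2
  · intro hz
    exact hz₀Ac (by
      have : e (g * z₀ * g⁻¹) ∈ Ac := (hmemAc _).mp hz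
      have heq : e (g * z₀ * g⁻¹) = z₀ := by rw [he_apply]; group
      exact heq ▸ this)

lemma core_lemma (p : ℕ) (hp : p.Prime)
    (W : Subgroup G) (hWn : W.Normal) (hWp : IsPGroup p ↥W)
    (hWc : Subgroup.centralizer (W : Set G) ≤ W)
    (Sp : Subgroup G)
    (hSconj : ∀ T : Subgroup G, IsPGroup p ↥T → ∃ g : G, ∀ t ∈ T, g⁻¹ * t * g ∈ Sp)
    (hSni : NormalizerIncreasing ↥Sp)
    (U : Subgroup G) (hU : IsPGroup p ↥U)
    (Qg : Subgroup G) (hQp : IsPGroup p ↥Qg)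
    (hQmax : ∀ N : Subgroup G, N ≤ (Subgroup.normalizer (U : Set G)) →
      (∀ h ∈ (Subgroup.normalizer (U : Set G)), ∀ n ∈ N, h * n * h⁻¹ ∈ N) → IsPGroup p ↥N → N ≤ Qg)
    (x : G) (hxH : x ∈ (Subgroup.normalizer (U : Set G)))
    (hxc : ∀ q ∈ Qg, Commute x q)
    (hxord : Nat.Coprime (orderOf x) p) :
    x = 1 := by
  haveI := hWn
  set K := Subgroup.centralizer ({x} : Set G) with hK
  have hmemK : ∀ g : G, g ∈ K ↔ x * g = g * x := by
    intro g
    rw [hK, Subgroup.mem_centralizer_iff]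
    constructor
    · intro h; exact h x rfl
    · intro h y hy
      rw [Set.mem_singleton_iff] at hy; subst hy; exact h
  have hQK : Qg ≤ K := fun q hq => (hmemK q).mpr (hxc q hq).eq
  have hUQ : U ≤ Qg := by
    refine hQmax U Subgroup.le_normalizer ?_ hU
    intro h hh n hn
    exact (Subgroup.mem_normalizer_iff.mp hh n).mp hn
  have hWHQ : W ⊓ (Subgroup.normalizer (U : Set G)) ≤ Qg := by
    refine hQmax _ inf_le_right ?_ ?_
    · intro h hh n hn
      exact ⟨hWn.conj_mem n hn.1 h,
        (Subgroup.normalizer (U : Set G)).mul_mem ((Subgroup.normalizer (U : Set G)).mul_mem hh hn.2) ((Subgroup.normalizer (U : Set G)).inv_mem hh)⟩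
    · rw [isPGroup_subgroup_iff]
      intro g hg
      exact (isPGroup_subgroup_iff p W).mp hWp g hg.1
  set S : Set (Subgroup G) := {T | Qg ≤ T ∧ T ≤ K ∧ IsPGroup p ↥T} with hS
  obtain ⟨T, hQT, hTmax⟩ : ∃ T, Qg ≤ T ∧ Maximal (· ∈ S) T := by
    refine zorn_le_nonempty₀ S ?_ Qg ⟨le_rfl, hQK, hQp⟩
    intro c hcS hchain y hy
    refine ⟨sSup c, ?_, fun z hz => le_sSup hz⟩
    have hne : c.Nonempty := ⟨y, hy⟩
    have hdir : DirectedOn (· ≤ ·) c := hchain.directedOn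
    have hmem : ∀ g : G, g ∈ sSup c ↔ ∃ Z ∈ c, g ∈ Z := fun g =>
      Subgroup.mem_sSup_of_directedOn hne hdir
    refine ⟨le_trans (hcS hy).1 (le_sSup hy), ?_, ?_⟩
    · intro g hg
      obtain ⟨Z, hZ, hgZ⟩ := (hmem g).mp hg
      exact (hcS hZ).2.1 hgZ
    · rw [isPGroup_subgroup_iff]
      intro g hg
      obtain ⟨Z, hZ, hgZ⟩ := (hmem g).mp hg
      exact (isPGroup_subgroup_iff p Z).mp (hcS hZ).2.2 g hgZ
  obtain ⟨-, hTK, hTp⟩ := hTmax.prop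
  by_cases hWT : W ≤ T
  · have hxW : x ∈ W := by
      apply hWc
      rw [Subgroup.mem_centralizer_iff]
      intro w hw
      exact ((hmemK w).mp (hTK (hWT hw))).symm
    obtain ⟨k, hk⟩ := (isPGroup_subgroup_iff p W).mp hWp x hxW
    have hdvd : orderOf x ∣ p ^ k := orderOf_dvd_of_pow_eq_one hk
    have : orderOf x = 1 := (hxord.pow_right k).eq_one_of_dvd hdvd
    exact orderOf_eq_one_iff.mp this
  · exfalso
    set P := T ⊔ W with hP
    have hPp : IsPGroup p ↥P := IsPGroup.to_sup_of_normal_right hTp hWp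
    have hTP : T < P := by
      refine lt_of_le_of_ne le_sup_left fun h => hWT ?_
      rw [h]; exact le_sup_right
    obtain ⟨z, hzP, hznorm, hzT⟩ := exists_normalizing p Sp hSconj hSni T P hPp hTP
    have hzmem : z ∈ (T : Set G) * (W : Set G) := by
      rw [← Subgroup.mul_normal T W]
      exact hzP
    obtain ⟨t, ht, w₀, hw₀W, hzw⟩ := hzmem
    have hw0T : w₀ ∉ T := by
      intro h
      exact hzT (by rw [← hzw]; exact T.mul_mem ht h)
    have hw0norm : w₀ ∈ (Subgroup.normalizer (T : Set G)) := by
      have h1 : t⁻¹ * z ∈ (Subgroup.normalizer (T : Set G)) :=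
        (Subgroup.normalizer (T : Set G)).mul_mem ((Subgroup.normalizer (T : Set G)).inv_mem (Subgroup.le_normalizer ht)) hznorm
      have h2 : w₀ = t⁻¹ * z := by rw [← hzw]; group
      rw [h2]; exact h1
    have hw0conj := Subgroup.mem_normalizer_iff.mp hw0norm
    set c := w₀⁻¹ * x⁻¹ * w₀ * x with hc
    have hcW : c ∈ W := by
      have h1 : x⁻¹ * w₀ * x ∈ W := by
        have := hWn.conj_mem w₀ hw₀W x⁻¹
        simpa using this
      have h2 := W.mul_mem (W.inv_mem hw₀W) h1
      simpa [hc, mul_assoc] using h2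
    have hxT : ∀ t' ∈ T, x * t' = t' * x := fun t' ht' => (hmemK t').mp (hTK ht')
    have hcT : ∀ t' ∈ T, c * t' * c⁻¹ = t' := by
      intro t' ht'
      have hxt' : x * t' = t' * x := hxT t' ht'
      have ht'' : w₀ * t' * w₀⁻¹ ∈ T := (hw0conj t').mp ht'
      have hxA : x * (w₀ * t' * w₀⁻¹) = (w₀ * t' * w₀⁻¹) * x := hxT _ ht''
      have s1 : x * t' * x⁻¹ = t' := by rw [hxt']; group
      have s2 : x⁻¹ * (w₀ * t' * w₀⁻¹) * x = w₀ * t' * w₀⁻¹ := by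
        rw [mul_assoc, ← hxA]; group
      have expand : c * t' * c⁻¹ = w₀⁻¹ * (x⁻¹ * (w₀ * (x * t' * x⁻¹) * w₀⁻¹) * x) * w₀ := by
        rw [hc]; group
      rw [expand, s1, s2]; group
    have hcH : c ∈ (Subgroup.normalizer (U : Set G)) := by
      rw [Subgroup.mem_normalizer_iff]
      intro u
      constructor
      · intro hu
        rw [hcT u (hQT (hUQ hu))]; exact hu
      · intro hu
        have h5 : c * (c * u * c⁻¹) * c⁻¹ = c * u * c⁻¹ := hcT _ (hQT (hUQ hu))
        have h6 : u = c⁻¹ * (c * u * c⁻¹) * c := by group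
        have h7 : c⁻¹ * (c * u * c⁻¹) * c = c * u * c⁻¹ := by
          conv_lhs => rw [← h5]
          group
        rw [h6, h7]; exact hu
    have hcQ : c ∈ Qg := hWHQ ⟨hcW, hcH⟩
    have hCxc : Commute x c := hxc c hcQ
    have tel : ∀ k : ℕ, x⁻¹ ^ k * w₀ * x ^ k = w₀ * c ^ k := by
      intro k; induction k with
      | zero => simp
      | succ n ih =>
        have hxc' : x⁻¹ * c ^ n = c ^ n * x⁻¹ := ((hCxc.pow_right n).inv_left).eq
        have h1 : x⁻¹ * w₀ * x = w₀ * c := by rw [hc]; group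
        calc x⁻¹ ^ (n + 1) * w₀ * x ^ (n + 1)
            = x⁻¹ * (x⁻¹ ^ n * w₀ * x ^ n) * x := by rw [pow_succ', pow_succ]; group
          _ = x⁻¹ * (w₀ * c ^ n) * x := by rw [ih]
          _ = (x⁻¹ * w₀ * x) * (x⁻¹ * c ^ n * x) := by group
          _ = (w₀ * c) * (x⁻¹ * c ^ n * x) := by rw [h1]
          _ = (w₀ * c) * (c ^ n * x⁻¹ * x) := by rw [hxc']
          _ = w₀ * (c * c ^ n) := by group
          _ = w₀ * c ^ (n + 1) := by rw [← pow_succ']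
    have hxn : x ^ orderOf x = 1 := pow_orderOf_eq_one x
    have hcn : c ^ orderOf x = 1 := by
      have htel := tel (orderOf x)
      rw [inv_pow, hxn] at htel
      simp only [inv_one, one_mul, mul_one] at htel
      exact (mul_eq_left.mp htel.symm)
    obtain ⟨j, hj⟩ := (isPGroup_subgroup_iff p W).mp hWp c hcW
    have hd1 : orderOf c ∣ orderOf x := orderOf_dvd_of_pow_eq_one hcn
    have hd2 : orderOf c ∣ p ^ j := orderOf_dvd_of_pow_eq_one hj
    have hcop : Nat.Coprime (orderOf c) (p ^ j) :=
      Nat.Coprime.pow_right j (Nat.Coprime.coprime_dvd_left hd1 hxord)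
    have hc1 : c = 1 := orderOf_eq_one_iff.mp (hcop.eq_one_of_dvd hd2)
    have hw0K : w₀ ∈ K := by
      rw [hmemK]
      have h0 : w₀⁻¹ * x⁻¹ * w₀ * x = 1 := by rw [← hc]; exact hc1
      have h2 : w₀ * (w₀⁻¹ * x⁻¹ * w₀ * x) * x⁻¹ = w₀ * 1 * x⁻¹ := by rw [h0]
      have hL : w₀ * (w₀⁻¹ * x⁻¹ * w₀ * x) * x⁻¹ = x⁻¹ * w₀ := by group
      have hR : w₀ * 1 * x⁻¹ = w₀ * x⁻¹ := by group
      rw [hL, hR] at h2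
      have h5 := congrArg (fun z => x * z * x) h2
      beta_reduce at h5
      have hL2 : x * (x⁻¹ * w₀) * x = w₀ * x := by group
      have hR2 : x * (w₀ * x⁻¹) * x = x * w₀ := by group
      rw [hL2, hR2] at h5
      exact h5.symm
    have hw0pow : ∃ j', w₀ ^ p ^ j' = 1 := (isPGroup_subgroup_iff p W).mp hWp w₀ hw₀W
    have hzp : IsPGroup p ↥(Subgroup.zpowers w₀) := by
      rw [isPGroup_subgroup_iff]
      intro g hg
      obtain ⟨j', hj'⟩ := hw0pow
      obtain ⟨i, rfl⟩ := Subgroup.mem_zpowers_iff.mp hg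
      refine ⟨j', ?_⟩
      rw [← zpow_natCast (w₀ ^ (i : ℤ)), ← zpow_mul, mul_comm, zpow_mul, zpow_natCast, hj',
        one_zpow]
    have hT'' : Subgroup.zpowers w₀ ⊔ T ∈ S := by
      refine ⟨hQT.trans le_sup_right, ?_, ?_⟩
      · exact sup_le (Subgroup.zpowers_le.mpr hw0K) hTK
      · exact IsPGroup.to_sup_of_normal_right' hzp hTp (Subgroup.zpowers_le.mpr hw0norm)
    have hle : Subgroup.zpowers w₀ ⊔ T ≤ T := hTmax.2 hT'' le_sup_right
    exact hw0T (hle (Subgroup.mem_sup_left (Subgroup.mem_zpowers w₀)))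

end Auxiliary

/-- Lemma 6.5(b). Let `G` be a countable, locally finite group of
characteristic `p` having a maximal `p`-subgroup `Sp` to which every `p`-subgroup of `G`
is conjugate (into), and suppose `Sp` has the normalizer-increasing property.  Then every
`p`-local subgroup `N_G(U)` of `G` is of characteristic `p`. -/
theorem pLocal_characteristicP
    {G : Type*} [Group G] (p : ℕ) (hp : p.Prime)
    [Countable G] (hlf : LocallyFiniteGroup G)
    (hchar : CharacteristicPGroup p G)
    (Sp : Subgroup G) (hSp : IsPGroup p ↥Sp)
    (hSmax : ∀ T : Subgroup G, IsPGroup p ↥T → Sp ≤ T → T = Sp)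
    (hSconj : ∀ T : Subgroup G, IsPGroup p ↥T → ∃ g : G, ∀ t ∈ T, g⁻¹ * t * g ∈ Sp)
    (hSni : NormalizerIncreasing ↥Sp)
    (U : Subgroup G) (hU : IsPGroup p ↥U) :
    CharacteristicPGroup p ↥(Subgroup.normalizer (U : Set G)) := by
  obtain ⟨W, ⟨⟨hWn, hWp⟩, -⟩, hWc⟩ := hchar
  set Hn := (Subgroup.normalizer (U : Set G)) with hHn
  set S : Set (Subgroup ↥Hn) := {N | N.Normal ∧ IsPGroup p ↥N} with hSdef
  have hbot : (⊥ : Subgroup ↥Hn) ∈ S :=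
    ⟨⟨fun n hn g => by rw [Subgroup.mem_bot] at hn ⊢; simp [hn]⟩, IsPGroup.of_bot⟩
  have hdir : DirectedOn (· ≤ ·) S := by
    rintro N₁ ⟨h₁n, h₁p⟩ N₂ ⟨h₂n, h₂p⟩
    haveI := h₁n; haveI := h₂n
    exact ⟨N₁ ⊔ N₂, ⟨Subgroup.sup_normal N₁ N₂, IsPGroup.to_sup_of_normal_right h₁p h₂p⟩,
      le_sup_left, le_sup_right⟩
  set O : Subgroup ↥Hn := sSup S with hO
  have hmemO : ∀ g : ↥Hn, g ∈ O ↔ ∃ N ∈ S, g ∈ N := fun g =>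
    Subgroup.mem_sSup_of_directedOn ⟨⊥, hbot⟩ hdir
  have hOn : O.Normal := by
    constructor
    intro n hn h
    obtain ⟨N, hN, hnN⟩ := (hmemO n).mp hn
    exact (hmemO _).mpr ⟨N, hN, hN.1.conj_mem n hnN h⟩
  have hOp : IsPGroup p ↥O := by
    rw [isPGroup_subgroup_iff]
    intro g hg
    obtain ⟨N, hN, hgN⟩ := (hmemO g).mp hg
    exact (isPGroup_subgroup_iff p N).mp hN.2 g hgN
  refine ⟨O, ⟨⟨hOn, hOp⟩, fun N hN => le_sSup hN⟩, ?_⟩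
  -- now the centralizer condition
  set C : Subgroup ↥Hn := Subgroup.centralizer (O : Set ↥Hn) with hC
  have hCn : C.Normal := by
    constructor
    intro n hn h
    rw [Subgroup.mem_centralizer_iff] at hn ⊢
    intro o ho
    have ho' : h⁻¹ * o * h ∈ O := by
      have := hOn.conj_mem o ho h⁻¹
      simpa using this
    have hcomm := hn _ ho'
    calc o * (h * n * h⁻¹) = h * ((h⁻¹ * o * h) * n) * h⁻¹ := by group
      _ = h * (n * (h⁻¹ * o * h)) * h⁻¹ := by rw [hcomm]
      _ = (h * n * h⁻¹) * o := by group
  -- the p-core of N_G(U), as a subgroup of G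
  set Qg : Subgroup G := O.map Hn.subtype with hQg
  have hQp' : IsPGroup p ↥Qg := by
    rw [isPGroup_subgroup_iff]
    rintro g ⟨o, hoO, rfl⟩
    obtain ⟨k, hk⟩ := (isPGroup_subgroup_iff p O).mp hOp o hoO
    exact ⟨k, by simpa [← Subtype.ext_iff] using congrArg (Subtype.val) hk⟩
  have hQmax : ∀ N : Subgroup G, N ≤ Hn →
      (∀ h ∈ Hn, ∀ n ∈ N, h * n * h⁻¹ ∈ N) → IsPGroup p ↥N → N ≤ Qg := by
    intro N hNH hNconj hNp
    set N' : Subgroup ↥Hn := N.subgroupOf Hn with hN'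
    have hN'n : N'.Normal := by
      constructor
      intro n hn h
      rw [Subgroup.mem_subgroupOf] at hn ⊢
      simpa using hNconj h.val h.2 n.val hn
    have hN'p : IsPGroup p ↥N' := by
      rw [isPGroup_subgroup_iff]
      intro g hg
      obtain ⟨k, hk⟩ := (isPGroup_subgroup_iff p N).mp hNp g.val (Subgroup.mem_subgroupOf.mp hg)
      exact ⟨k, by ext : 1; simpa using hk⟩
    have hN'O : N' ≤ O := le_sSup ⟨hN'n, hN'p⟩
    intro n hn
    have hmem : (⟨n, hNH hn⟩ : ↥Hn) ∈ N' := by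
      rw [Subgroup.mem_subgroupOf]; exact hn
    exact ⟨⟨n, hNH hn⟩, hN'O hmem, rfl⟩
  -- C is a p-group
  have hCp : IsPGroup p ↥C := by
    rw [isPGroup_subgroup_iff]
    intro y₀ hy₀
    set x : G := (y₀ : G) with hx
    have hxc : ∀ q ∈ Qg, Commute x q := by
      rintro q ⟨o, hoO, rfl⟩
      have hcm := Subgroup.mem_centralizer_iff.mp hy₀ o hoO
      have hcoe : (o : G) * x = x * (o : G) := congrArg Subtype.val hcm
      exact hcoe.symm
    have hxH : x ∈ Hn := y₀.2
    have hfin : 0 < orderOf x := by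
      have hfin1 : ((Subgroup.closure ({x} : Set G) : Subgroup G) : Set G).Finite := by
        have := hlf {x}
        simpa using this
      rw [← Subgroup.zpowers_eq_closure] at hfin1
      haveI : Finite ↥(Subgroup.zpowers x) := hfin1.to_subtype
      rw [← Nat.card_zpowers]
      exact Nat.card_pos
    set n := orderOf x with hnn
    set a := n.factorization p with ha
    have hdvd : p ^ a ∣ n := Nat.ordProj_dvd n p
    have hXord : Nat.Coprime (orderOf (x ^ p ^ a)) p := by
      rw [orderOf_pow' x (pow_pos hp.pos a).ne', ← hnn, Nat.gcd_comm, Nat.gcd_eq_left hdvd]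
      exact (Nat.coprime_ordCompl hp hfin.ne').symm
    have hone : x ^ p ^ a = 1 := by
      refine core_lemma p hp W hWn hWp hWc Sp hSconj hSni U hU Qg hQp' hQmax
        (x ^ p ^ a) (Hn.pow_mem hxH _) ?_ hXord
      intro q hq
      exact (hxc q hq).pow_left _
    refine ⟨a, ?_⟩
    ext : 1
    simpa using hone
  have hCS : C ∈ S := ⟨hCn, hCp⟩
  intro y hy
  exact le_sSup hCS hy
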